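/- Fix a > 0 and m, η₀ ∈ ℝ; set G(η) = a(m + η) and G₀ = G(η₀), and define H(η) = Φ(G₀) log Φ(G(η)) + (1 − Φ(G₀)) log(1 − Φ(G(η))) for η ∈ ℝ. Then H is differentiable on ℝ with H'(η) = a Λ(G(η)) (Φ(G₀) − Φ(G(η))), where Λ(t) = φ(t)/(Φ(t)(1 − Φ(t))); moreover η₀ is the unique zero of H' and H attains a strict global maximum on ℝ at η = η₀ (H(η) < H(η₀) for all η ≠ η₀). -/

import Mathlib

open MeasureTheory ProbabilityTheory

/-- The standard normal density. -/
noncomputable def stdNormalPDF (t : ℝ) : ℝ := gaussianPDFReal 0 1 t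

/-- The standard normal cumulative distribution function. -/
noncomputable def stdNormalCDF (x : ℝ) : ℝ := ∫ t in Set.Iic x, gaussianPDFReal 0 1 t

/-- `Λ(t) = φ(t)/(Φ(t)(1 − Φ(t)))`. -/
noncomputable def stdLambda (t : ℝ) : ℝ := stdNormalPDF t / (stdNormalCDF t * (1 - stdNormalCDF t))

lemma pdf_pos (t : ℝ) : 0 < stdNormalPDF t := gaussianPDFReal_pos 0 1 t one_ne_zero

lemma pdf_cont : Continuous stdNormalPDF := by
  unfold stdNormalPDF gaussianPDFReal
  fun_prop

lemma pdf_integrable : Integrable stdNormalPDF := integrable_gaussianPDFReal 0 1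

lemma cdf_eq (x : ℝ) : stdNormalCDF x = ∫ t in Set.Iic x, stdNormalPDF t := rfl

lemma cdf_hasDeriv (x : ℝ) : HasDerivAt stdNormalCDF (stdNormalPDF x) x := by
  have h1 : HasDerivAt (fun y => stdNormalCDF 0 + ∫ t in (0:ℝ)..y, stdNormalPDF t)
      (stdNormalPDF x) x := by
    refine HasDerivAt.const_add _ ?_
    exact intervalIntegral.integral_hasDerivAt_right
      (pdf_integrable.intervalIntegrable)
      (pdf_cont.stronglyMeasurableAtFilter _ _)
      pdf_cont.continuousAt
  refine h1.congr_of_eventuallyEq (Filter.Eventually.of_forall fun y => ?_)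
  simp only
  rw [← intervalIntegral.integral_Iic_sub_Iic pdf_integrable.integrableOn
    pdf_integrable.integrableOn, cdf_eq, cdf_eq]
  ring

lemma support_pdf : Function.support stdNormalPDF = Set.univ := by
  ext t; simpa using (pdf_pos t).ne'

lemma cdf_pos (x : ℝ) : 0 < stdNormalCDF x := by
  rw [cdf_eq, setIntegral_pos_iff_support_of_nonneg_ae
    (Filter.Eventually.of_forall fun t => (pdf_pos t).le) pdf_integrable.integrableOn,
    support_pdf, Set.univ_inter]
  simp

lemma cdf_lt_one (x : ℝ) : stdNormalCDF x < 1 := by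
  have htot : stdNormalCDF x + ∫ t in Set.Ioi x, stdNormalPDF t = 1 := by
    rw [cdf_eq, intervalIntegral.integral_Iic_add_Ioi pdf_integrable.integrableOn pdf_integrable.integrableOn]
    exact integral_gaussianPDFReal_eq_one 0 one_ne_zero
  have hpos : 0 < ∫ t in Set.Ioi x, stdNormalPDF t := by
    rw [setIntegral_pos_iff_support_of_nonneg_ae
      (Filter.Eventually.of_forall fun t => (pdf_pos t).le) pdf_integrable.integrableOn,
      support_pdf, Set.univ_inter]
    simp
  linarith

lemma cdf_strictMono : StrictMono stdNormalCDF :=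
  strictMono_of_deriv_pos fun x => by rw [(cdf_hasDeriv x).deriv]; exact pdf_pos x

lemma lambda_pos (t : ℝ) : 0 < stdLambda t :=
  div_pos (pdf_pos t) (mul_pos (cdf_pos t) (by linarith [cdf_lt_one t]))

/-- The population probit criterion
`H(η) = Φ(G₀) log Φ(G(η)) + (1 − Φ(G₀)) log(1 − Φ(G(η)))`, `G(η) = a(m+η)`, `G₀ = G(η₀)`,
is differentiable with `H'(η) = a Λ(G(η))(Φ(G₀) − Φ(G(η)))`; `η₀` is the unique zero of `H'`
and `H` has a strict global maximum at `η₀`. -/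
theorem stmt13 (a : ℝ) (ha : 0 < a) (m η₀ : ℝ)
    (G : ℝ → ℝ) (hG : ∀ η, G η = a * (m + η))
    (H : ℝ → ℝ)
    (hH : ∀ η, H η = stdNormalCDF (G η₀) * Real.log (stdNormalCDF (G η)) +
      (1 - stdNormalCDF (G η₀)) * Real.log (1 - stdNormalCDF (G η))) :
    (∀ η, HasDerivAt H (a * stdLambda (G η) * (stdNormalCDF (G η₀) - stdNormalCDF (G η))) η) ∧
    (∀ η, a * stdLambda (G η) * (stdNormalCDF (G η₀) - stdNormalCDF (G η)) = 0 ↔ η = η₀) ∧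
    (∀ η, η ≠ η₀ → H η < H η₀) := by
  set c := stdNormalCDF (G η₀) with hc
  have hGd : ∀ η, HasDerivAt G a η := by
    intro η
    have h : HasDerivAt (fun η : ℝ => a * (m + η)) (a * 1) η :=
      ((hasDerivAt_id η).const_add m).const_mul a
    rw [mul_one] at h
    exact h.congr_of_eventuallyEq (Filter.Eventually.of_forall fun y => hG y)
  have hd : ∀ η, HasDerivAt H (a * stdLambda (G η) * (c - stdNormalCDF (G η))) η := by
    intro η
    have hΦpos := cdf_pos (G η)
    have hΦlt := cdf_lt_one (G η)
    have hΦ : HasDerivAt (fun η => stdNormalCDF (G η)) (stdNormalPDF (G η) * a) η :=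
      (cdf_hasDeriv (G η)).comp η (hGd η)
    have h1 : HasDerivAt (fun η => c * Real.log (stdNormalCDF (G η)))
        (c * (stdNormalPDF (G η) * a / stdNormalCDF (G η))) η :=
      (hΦ.log hΦpos.ne').const_mul c
    have h2 : HasDerivAt (fun η => (1 - c) * Real.log (1 - stdNormalCDF (G η)))
        ((1 - c) * (-(stdNormalPDF (G η) * a) / (1 - stdNormalCDF (G η)))) η :=
      ((hΦ.const_sub 1).log (by linarith)).const_mul (1 - c)
    have h := h1.add h2
    have heq : c * (stdNormalPDF (G η) * a / stdNormalCDF (G η)) +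
        (1 - c) * (-(stdNormalPDF (G η) * a) / (1 - stdNormalCDF (G η))) =
        a * stdLambda (G η) * (c - stdNormalCDF (G η)) := by
      have hne1 : stdNormalCDF (G η) ≠ 0 := hΦpos.ne'
      have hne2 : 1 - stdNormalCDF (G η) ≠ 0 := by linarith
      rw [stdLambda]
      field_simp
      ring
    rw [heq] at h
    exact h.congr_of_eventuallyEq (Filter.Eventually.of_forall fun y => hH y)
  have hGinj : ∀ {x y : ℝ}, G x = G y → x = y := by
    intro x y hxy
    rw [hG, hG] at hxy
    have := mul_left_cancel₀ ha.ne' hxy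
    linarith
  have hGmono : ∀ {x y : ℝ}, x < y → G x < G y := by
    intro x y hxy
    rw [hG, hG]
    nlinarith
  have hzero : ∀ η, a * stdLambda (G η) * (c - stdNormalCDF (G η)) = 0 ↔ η = η₀ := by
    intro η
    constructor
    · intro h
      have hal : a * stdLambda (G η) ≠ 0 := (mul_pos ha (lambda_pos (G η))).ne'
      have : c - stdNormalCDF (G η) = 0 := by
        rcases mul_eq_zero.1 h with h' | h'
        · exact absurd h' hal
        · exact h'
      have : stdNormalCDF (G η₀) = stdNormalCDF (G η) := by rw [← hc]; linarith
      exact (hGinj (cdf_strictMono.injective this)).symm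
    · rintro rfl; simp [hc]
  refine ⟨hd, hzero, ?_⟩
  have hcont : Continuous H := by
    have : Differentiable ℝ H := fun η => (hd η).differentiableAt
    exact this.continuous
  intro η hη
  rcases lt_or_gt_of_ne hη with hlt | hgt
  · have hmono : StrictMonoOn H (Set.Iic η₀) := by
      refine strictMonoOn_of_deriv_pos (convex_Iic η₀) hcont.continuousOn fun x hx => ?_
      rw [interior_Iic, Set.mem_Iio] at hx
      rw [(hd x).deriv]
      have : stdNormalCDF (G x) < c := cdf_strictMono (hGmono hx)
      have := mul_pos ha (lambda_pos (G x))
      nlinarith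
    exact hmono (Set.mem_Iic.2 hlt.le) (Set.mem_Iic.2 le_rfl) hlt
  · have hanti : StrictAntiOn H (Set.Ici η₀) := by
      refine strictAntiOn_of_deriv_neg (convex_Ici η₀) hcont.continuousOn fun x hx => ?_
      rw [interior_Ici, Set.mem_Ioi] at hx
      rw [(hd x).deriv]
      have : c < stdNormalCDF (G x) := cdf_strictMono (hGmono hx)
      have := mul_pos ha (lambda_pos (G x))
      nlinarith
    exact hanti (Set.mem_Ici.2 le_rfl) (Set.mem_Ici.2 hgt.le) hgt
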